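/- For every configuration x : Fin n → ℝ and all indices i, j: if i and j lie in the same connected component of the geometric graph of T(x), then i and j lie in the same connected component of the geometric graph of x. Consequently, for every i, the connected component of i with respect to T(x) is contained in the connected component of i with respect to x, and the component sizes #C are nonincreasing under iteration of T. -/

import Mathlib

/-- The Hegselmann–Krause update with radius `R = 1` on configurations of `n` points. -/
noncomputable def hkUpdate {n : ℕ} (x : Fin n → ℝ) : Fin n → ℝ := fun i =>
  (∑ j ∈ Finset.univ.filter (fun j => |x j - x i| ≤ 1), x j) /
    ((Finset.univ.filter (fun j : Fin n => |x j - x i| ≤ 1)).card : ℝ)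

/-- The geometric graph of a configuration: distinct `i`, `j` are adjacent iff
`|x i - x j| ≤ 1`. -/
def geomGraph {n : ℕ} (x : Fin n → ℝ) : SimpleGraph (Fin n) where
  Adj i j := i ≠ j ∧ |x i - x j| ≤ 1
  symm := ⟨fun i j h => ⟨h.1.symm, by rw [abs_sub_comm]; exact h.2⟩⟩
  loopless := ⟨fun i h => h.1 rfl⟩

lemma geom_reachable_of_close {n : ℕ} (x : Fin n → ℝ) {i j : Fin n}
    (h : |x i - x j| ≤ 1) : (geomGraph x).Reachable i j := by
  by_cases hij : i = j
  · exact hij ▸ SimpleGraph.Reachable.refl i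
  · exact SimpleGraph.Adj.reachable ⟨hij, h⟩

/-- crossing lemma -/
lemma crossing {n : ℕ} (x : Fin n → ℝ) (c : ℝ) {u v : Fin n}
    (h : (geomGraph x).Reachable u v) (hu : x u ≤ c) (hv : c ≤ x v) :
    ∃ w, (geomGraph x).Reachable u w ∧ x w ≤ c ∧ c ≤ x w + 1 := by
  obtain ⟨p⟩ := h
  revert hu
  induction p with
  | nil => exact fun hu => ⟨_, SimpleGraph.Reachable.refl _, hu, le_trans hv (by linarith)⟩
  | @cons a b v hab p ih =>
    intro hu
    by_cases hb : x b ≤ c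
    · obtain ⟨w, hw, h1, h2⟩ := ih hv hb
      exact ⟨w, (SimpleGraph.Adj.reachable hab).trans hw, h1, h2⟩
    · refine ⟨a, SimpleGraph.Reachable.refl a, hu, ?_⟩
      have h2 := abs_le.mp hab.2
      push_neg at hb
      linarith [h2.1, h2.2]

lemma avg_bounds {n : ℕ} (x : Fin n → ℝ) (i : Fin n) :
    (∃ k, (geomGraph x).Reachable i k ∧ x k ≤ hkUpdate x i) ∧
    (∃ k, (geomGraph x).Reachable i k ∧ hkUpdate x i ≤ x k) := by
  classical
  set s := Finset.univ.filter (fun j : Fin n => |x j - x i| ≤ 1) with hs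
  have hi : i ∈ s := by
    simp [hs, abs_nonneg]
  have hne : s.Nonempty := ⟨i, hi⟩
  have hcard : (0 : ℝ) < (s.card : ℝ) := by
    exact_mod_cast Finset.card_pos.mpr hne
  have havg : hkUpdate x i = (∑ j ∈ s, x j) / s.card := rfl
  have hsum : (∑ _j ∈ s, hkUpdate x i) = ∑ j ∈ s, x j := by
    rw [Finset.sum_const, havg, nsmul_eq_mul]
    field_simp
  have reach : ∀ k ∈ s, (geomGraph x).Reachable i k := by
    intro k hk
    have : |x k - x i| ≤ 1 := by simpa [hs] using hk
    exact geom_reachable_of_close x (by rw [abs_sub_comm]; exact this)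
  constructor
  · obtain ⟨k, hk, hle⟩ := Finset.exists_le_of_sum_le hne (le_of_eq hsum.symm)
    exact ⟨k, reach k hk, hle⟩
  · obtain ⟨k, hk, hle⟩ := Finset.exists_le_of_sum_le hne (le_of_eq hsum)
    exact ⟨k, reach k hk, hle⟩

lemma hk_adj_reachable {n : ℕ} (x : Fin n → ℝ) {i j : Fin n}
    (h : |hkUpdate x i - hkUpdate x j| ≤ 1) : (geomGraph x).Reachable i j := by
  classical
  by_contra hr
  set a := hkUpdate x i
  set b := hkUpdate x j
  obtain ⟨⟨k', hk', hk'le⟩, ⟨k, hk, hkle⟩⟩ := avg_bounds x i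
  obtain ⟨⟨m, hm, hmle⟩, ⟨m', hm', hm'le⟩⟩ := avg_bounds x j
  have hab := abs_le.mp h
  -- case x k < x m
  by_cases h1 : x k < x m
  · have : |x k - x m| ≤ 1 := by
      rw [abs_le]; constructor <;> linarith
    exact hr ((hk.trans (geom_reachable_of_close x this)).trans hm.symm)
  by_cases h2 : x m' < x k'
  · have : |x k' - x m'| ≤ 1 := by
      rw [abs_le]; constructor <;> linarith
    exact hr ((hk'.trans (geom_reachable_of_close x this)).trans hm'.symm)
  push_neg at h1 h2
  set c := max (x k') (x m)
  have hck : c ≤ x k := max_le (by linarith) h1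
  have hcm' : c ≤ x m' := max_le h2 (by linarith)
  obtain ⟨w, hw, hw1, hw2⟩ := crossing x c (hk'.symm.trans hk) (le_max_left _ _) hck
  obtain ⟨w', hw', hw'1, hw'2⟩ := crossing x c (hm.symm.trans hm') (le_max_right _ _) hcm'
  have : |x w - x w'| ≤ 1 := by
    rw [abs_le]; constructor <;> linarith
  exact hr (((hk'.trans hw).trans (geom_reachable_of_close x this)).trans (hm.trans hw').symm)

lemma hk_reachable_mono {n : ℕ} (x : Fin n → ℝ) {i j : Fin n}
    (h : (geomGraph (hkUpdate x)).Reachable i j) : (geomGraph x).Reachable i j := by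
  obtain ⟨p⟩ := h
  induction p with
  | nil => exact SimpleGraph.Reachable.refl _
  | @cons a b v hab _ ih => exact (hk_adj_reachable x hab.2).trans ih

/-- Connectivity only decreases under the HK update: points in the same connected
component after the update were in the same connected component before; consequently
components shrink and component sizes are nonincreasing under iteration. -/
theorem hkUpdate_components_shrink {n : ℕ} (x : Fin n → ℝ) :
    (∀ i j : Fin n,
      (geomGraph (hkUpdate x)).Reachable i j → (geomGraph x).Reachable i j) ∧
    (∀ i : Fin n,
      {j | (geomGraph (hkUpdate x)).Reachable i j} ⊆ {j | (geomGraph x).Reachable i j}) ∧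
    (∀ t : ℕ, ∀ i : Fin n,
      ({j | (geomGraph (hkUpdate^[t + 1] x)).Reachable i j} : Set (Fin n)).ncard ≤
        ({j | (geomGraph (hkUpdate^[t] x)).Reachable i j} : Set (Fin n)).ncard) := by
  refine ⟨fun i j h => hk_reachable_mono x h, fun i j h => hk_reachable_mono x h, ?_⟩
  intro t i
  apply Set.ncard_le_ncard _ (Set.toFinite _)
  intro j hj
  have : hkUpdate^[t + 1] x = hkUpdate (hkUpdate^[t] x) := Function.iterate_succ_apply' _ _ _
  rw [this] at hj
  exact hk_reachable_mono _ hj
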